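/- Let q > 1 and λ₁, λ₂ ∈ ℂ, and let f satisfy the eight PGL₃ Hecke eigenform recurrences. Then for all d ≥ 1, f(ε_{d+1,d+1}) = (1/q²)·(λ₁ f(ε_{d,d}) − (q+1)/(q²+q)·(λ₂ f(ε_{d−1,d−1}) − f(ε_{d−2,d−2}))), where f(ε_{−1,−1}) is interpreted via the base case λ₁ f(ε_{0,0}) = (q²+q+1) f(ε_{1,1}). -/

import Mathlib

/-- The eight recurrence relations satisfied by an unramified `Φ_{x,1}`, `Φ_{x,2}`
eigenform `f` (with eigenvalues `l1`, `l2`) for `PGL₃` over `P¹` at a degree one place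
`x`, via the graphs of Hecke operators on `PBun₃(P¹)`.  Indices: `f d₁ d₂` is the value
at `ε_{d₁,d₂}` = class of `O ⊕ O(d₁) ⊕ O(d₂)` (so `ε₀ = f 0 0`, `ε_d = f 0 d`),
meaningful for `0 ≤ d₁ ≤ d₂`. -/
def HeckeRel (q : ℝ) (l1 l2 : ℂ) (f : ℕ → ℕ → ℂ) : Prop :=
  (l1 * f 0 0 = ((q : ℂ) ^ 2 + q + 1) * f 1 1) ∧
  (∀ d : ℕ, 1 ≤ d → l1 * f 0 d = ((q : ℂ) ^ 2 + q) * f 1 (d + 1) + f 0 (d - 1)) ∧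
  (∀ d : ℕ, 1 ≤ d →
    l1 * f d d = (q : ℂ) ^ 2 * f (d + 1) (d + 1) + ((q : ℂ) + 1) * f (d - 1) d) ∧
  (∀ d1 d2 : ℕ, 1 ≤ d1 → d1 < d2 →
    l1 * f d1 d2 = (q : ℂ) ^ 2 * f (d1 + 1) (d2 + 1) + f d1 (d2 - 1)
      + (q : ℂ) * f (d1 - 1) d2) ∧
  (l2 * f 0 0 = ((q : ℂ) ^ 2 + q + 1) * f 0 1) ∧
  (∀ d : ℕ, 1 ≤ d → l2 * f 0 d = (q : ℂ) ^ 2 * f 0 (d + 1) + ((q : ℂ) + 1) * f 1 d) ∧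
  (∀ d : ℕ, 1 ≤ d →
    l2 * f d d = ((q : ℂ) ^ 2 + q) * f d (d + 1) + f (d - 1) (d - 1)) ∧
  (∀ d1 d2 : ℕ, 1 ≤ d1 → d1 < d2 →
    l2 * f d1 d2 = (q : ℂ) * f (d1 + 1) d2 + (q : ℂ) ^ 2 * f d1 (d2 + 1)
      + f (d1 - 1) (d2 - 1))

/-- for all `d ≥ 2`,
`f(ε_{d+1,d+1}) = (1/q²)(λ₁ f(ε_{d,d}) − (q+1)/(q²+q)·(λ₂ f(ε_{d−1,d−1}) − f(ε_{d−2,d−2})))`,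
and for `d = 1` the formula holds with `(λ₂ f(ε_{0,0}) − f(ε_{−1,−1}))` interpreted via
the base case, which gives `f(ε_{2,2}) = (1/q²)(λ₁ f(ε_{1,1}) − (q+1) λ₂ f(ε_{0,0})/(q²+q+1))`. -/
theorem stmt_10 (q : ℝ) (hq : 1 < q) (l1 l2 : ℂ) (f : ℕ → ℕ → ℂ)
    (hf : HeckeRel q l1 l2 f) :
    (f 2 2 = (1 / (q : ℂ) ^ 2) *
      (l1 * f 1 1 - ((q : ℂ) + 1) * (l2 * f 0 0) / ((q : ℂ) ^ 2 + q + 1))) ∧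
    (∀ d : ℕ, 2 ≤ d →
      f (d + 1) (d + 1) = (1 / (q : ℂ) ^ 2) * (l1 * f d d
        - (((q : ℂ) + 1) / ((q : ℂ) ^ 2 + q)) *
          (l2 * f (d - 1) (d - 1) - f (d - 2) (d - 2)))) := by
  obtain ⟨h1, h2, h3, h4, h5, h6, h7, h8⟩ := hf
  have hq0 : (q : ℂ) ≠ 0 := by
    exact_mod_cast ne_of_gt (lt_trans one_pos hq)
  have hqq : (q : ℂ) ^ 2 + q ≠ 0 := by
    have : (0:ℝ) < q ^ 2 + q := by positivity
    exact_mod_cast ne_of_gt this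
  have hqq1 : (q : ℂ) ^ 2 + q + 1 ≠ 0 := by
    have : (0:ℝ) < q ^ 2 + q + 1 := by positivity
    exact_mod_cast ne_of_gt this
  constructor
  · have e3 := h3 1 le_rfl
    norm_num at e3
    rw [h5, e3]
    field_simp
    ring_nf
    have h' : (1:ℂ) + q + q ^ 2 ≠ 0 := by
      rw [show (1:ℂ) + q + q ^ 2 = q ^ 2 + q + 1 by ring]; exact hqq1
    field_simp
    ring
  · intro d hd
    obtain ⟨e, rfl⟩ : ∃ e, d = e + 2 := ⟨d - 2, by omega⟩
    have e3 := h3 (e + 2) (by omega)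
    have e7 := h7 (e + 1) (by omega)
    simp only [show e + 2 - 1 = e + 1 from rfl, show e + 1 - 1 = e from rfl,
      show e + 1 + 1 = e + 2 from rfl, show e + 2 - 2 = e from rfl] at e3 e7 ⊢
    rw [e3, e7]
    have hq1 : (q : ℂ) + 1 ≠ 0 := by
      have : (0:ℝ) < q + 1 := by linarith
      exact_mod_cast ne_of_gt this
    field_simp
    ring
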